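/- Let Y be a real normed space and f: ℓ¹(Γ) → Y a surjective phase-isometry. Fix γ₀ ∈ Γ and t ∈ ℝ. If x ∈ ℓ¹(Γ) satisfies f(x) = t·f(e_{γ₀}), then x = t·e_{γ₀} or x = −t·e_{γ₀}. -/

import Mathlib

set_option maxHeartbeats 1000000

private lemma normAddSingle {Γ : Type*} [DecidableEq Γ] (x : lp (fun _ : Γ => ℝ) 1) (γ : Γ) (c : ℝ) :
    ‖x + lp.single 1 γ c‖ = ‖x‖ + |x γ + c| - |x γ| := by
  have hp : (0:ℝ) < (1 : ENNReal).toReal := by norm_num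
  set y : lp (fun _ : Γ => ℝ) 1 := x + lp.single 1 γ c with hy
  have H1 : HasSum (fun γ' => ‖x γ'‖) ‖x‖ := by
    simpa using lp.hasSum_norm hp x
  have H2 : HasSum (fun γ' => ‖y γ'‖) ‖y‖ := by
    simpa using lp.hasSum_norm hp y
  have hfun : (fun γ' => ‖y γ'‖)
      = Function.update (fun γ' => ‖x γ'‖) γ |x γ + c| := by
    funext γ'
    by_cases h : γ' = γ
    · subst h
      simp [hy, lp.coeFn_add, lp.single_apply_self, Real.norm_eq_abs]
    · simp [hy, lp.coeFn_add, lp.single_apply_ne _ _ _ h, Function.update_of_ne h, Pi.single_eq_of_ne h,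
        Real.norm_eq_abs]
  rw [hfun] at H2
  have H3 := H1.update γ (|x γ + c|)
  have h4 := H2.unique H3
  rw [h4]
  simp [Real.norm_eq_abs]
  ring

private lemma normSubSingle {Γ : Type*} [DecidableEq Γ] (x : lp (fun _ : Γ => ℝ) 1) (γ : Γ) (c : ℝ) :
    ‖x - lp.single 1 γ c‖ = ‖x‖ + |x γ - c| - |x γ| := by
  have h : x - lp.single 1 γ c = x + lp.single 1 γ (-c) := by
    rw [lp.single_neg, sub_eq_add_neg]
  rw [h, normAddSingle]
  ring_nf

private lemma pair_facts {p q P Q : ℝ} (h : ({p, q} : Set ℝ) = {P, Q}) :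
    (p = P ∨ p = Q) ∧ (q = P ∨ q = Q) ∧ (P = p ∨ P = q) ∧ (Q = p ∨ Q = q) := by
  refine ⟨?_, ?_, ?_, ?_⟩
  · have : p ∈ ({P, Q} : Set ℝ) := by rw [← h]; exact Set.mem_insert _ _
    simpa using this
  · have : q ∈ ({P, Q} : Set ℝ) := by
      rw [← h]; exact Set.mem_insert_iff.mpr (Or.inr rfl)
    simpa using this
  · have : P ∈ ({p, q} : Set ℝ) := by rw [h]; exact Set.mem_insert _ _
    simpa using this
  · have : Q ∈ ({p, q} : Set ℝ) := by
      rw [h]; exact Set.mem_insert_iff.mpr (Or.inr rfl)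
    simpa using this

private lemma pair_sum {p q P Q : ℝ} (h : ({p, q} : Set ℝ) = {P, Q}) : p + q = P + Q := by
  obtain ⟨h1, h2, h3, h4⟩ := pair_facts h
  rcases h1 with h1 | h1 <;> rcases h2 with h2 | h2 <;> rcases h3 with h3 | h3 <;>
    rcases h4 with h4 | h4 <;> linarith

private lemma normTSmul {Y : Type*} [NormedAddCommGroup Y] [NormedSpace ℝ Y] (u v : Y) (t : ℝ)
    (ht : 1 ≤ t) (hu : ‖u‖ = 1) (hv : ‖v‖ = 1) (huv : ‖u + v‖ = 2) :
    ‖t • u + v‖ = t + 1 := by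
  have ht0 : (0:ℝ) < t := by linarith
  have ht' : t ≠ 0 := ne_of_gt ht0
  have key : u + v = (1/t) • (t • u + v) + (1 - 1/t) • v := by
    match_scalars <;> field_simp <;> ring
  have haux : (0:ℝ) ≤ 1 - 1/t := by
    rw [sub_nonneg]
    exact (div_le_one ht0).mpr ht
  have hle : ‖t • u + v‖ ≤ t + 1 := by
    calc ‖t • u + v‖ ≤ ‖t • u‖ + ‖v‖ := norm_add_le _ _
      _ = t + 1 := by rw [norm_smul, hu, hv]; simp [abs_of_pos ht0]
  have h2 : (2:ℝ) ≤ (1/t) * ‖t • u + v‖ + (1 - 1/t) := by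
    calc (2:ℝ) = ‖u + v‖ := huv.symm
      _ = ‖(1/t) • (t • u + v) + (1 - 1/t) • v‖ := by rw [← key]
      _ ≤ ‖(1/t) • (t • u + v)‖ + ‖(1 - 1/t) • v‖ := norm_add_le _ _
      _ = (1/t) * ‖t • u + v‖ + (1 - 1/t) := by
          rw [norm_smul, norm_smul, hv, Real.norm_eq_abs, Real.norm_eq_abs,
            abs_of_nonneg (by positivity : (0:ℝ) ≤ 1/t), abs_of_nonneg haux, mul_one]
  have h3 := mul_le_mul_of_nonneg_left h2 ht0.le
  rw [mul_add, ← mul_assoc, mul_one_div, div_self ht'] at h3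
  have h4 : t * (1 - 1/t) = t - 1 := by field_simp
  rw [h4, one_mul] at h3
  linarith

private lemma eq_single_aux {Γ : Type*} [DecidableEq Γ] (x : lp (fun _ : Γ => ℝ) 1) (γ₀ : Γ)
    (h : ∀ γ, γ ≠ γ₀ → x γ = 0) : x = lp.single 1 γ₀ (x γ₀) := by
  have hp : (0:ℝ) < (1 : ENNReal).toReal := by norm_num
  set z : lp (fun _ : Γ => ℝ) 1 := x - lp.single 1 γ₀ (x γ₀) with hz
  have H : HasSum (fun γ => ‖z γ‖) ‖z‖ := by simpa using lp.hasSum_norm hp z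
  have hfun : (fun γ => ‖z γ‖) = fun _ => (0:ℝ) := by
    funext γ
    by_cases hγ : γ = γ₀
    · subst hγ; simp [hz, lp.coeFn_sub, lp.single_apply_self]
    · simp [hz, lp.coeFn_sub, lp.single_apply_ne _ _ _ hγ, h γ hγ, Pi.single_eq_of_ne hγ]
  rw [hfun] at H
  have h0 : ‖z‖ = 0 := H.unique hasSum_zero
  have : z = 0 := norm_eq_zero.mp h0
  rw [hz] at this
  linear_combination (norm := module) this

theorem stmt_13 {Γ : Type*} [DecidableEq Γ] {Y : Type*} [NormedAddCommGroup Y]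
    [NormedSpace ℝ Y] (f : lp (fun _ : Γ => ℝ) 1 → Y)
    (hf : ∀ x y : lp (fun _ : Γ => ℝ) 1,
      ({‖f x + f y‖, ‖f x - f y‖} : Set ℝ) = {‖x + y‖, ‖x - y‖})
    (hsurj : Function.Surjective f)
    (γ₀ : Γ) (t : ℝ) (x : lp (fun _ : Γ => ℝ) 1)
    (hx : f x = t • f (lp.single 1 γ₀ (1 : ℝ))) :
    x = t • lp.single 1 γ₀ (1 : ℝ) ∨ x = -(t • lp.single 1 γ₀ (1 : ℝ)) := by
  set e : lp (fun _ : Γ => ℝ) 1 := lp.single 1 γ₀ (1 : ℝ) with he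
  -- f preserves norms
  have hnorm : ∀ z : lp (fun _ : Γ => ℝ) 1, ‖f z‖ = ‖z‖ := by
    intro z
    have h := pair_facts (hf z z)
    rw [sub_self, norm_zero, sub_self, norm_zero] at h
    have e1 : ‖f z + f z‖ = 2 * ‖f z‖ := by
      rw [← two_smul ℝ (f z), norm_smul]; norm_num
    have e2 : ‖z + z‖ = 2 * ‖z‖ := by
      rw [← two_smul ℝ z, norm_smul]; norm_num
    rw [e1, e2] at h
    obtain ⟨h1, -, h3, -⟩ := h
    rcases h1 with h1 | h1 <;> rcases h3 with h3 | h3 <;> linarith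
  have he1 : ‖e‖ = 1 := by
    have := lp.norm_single (p := 1) (E := fun _ : Γ => ℝ) (by norm_num) γ₀ (1:ℝ)
    simpa [he] using this
  have hfe : ‖f e‖ = 1 := by rw [hnorm, he1]
  have hxnorm : ‖x‖ = |t| := by
    rw [← hnorm x, hx, norm_smul, hfe, Real.norm_eq_abs, mul_one]
  set a : ℝ := x γ₀ with ha
  -- coordinate bound
  have hcoordle : ∀ γ : Γ, |x γ| ≤ ‖x‖ := by
    intro γ
    have := normAddSingle x γ (-(x γ))
    simp only [add_neg_cancel, abs_zero] at this
    have h0 : (0:ℝ) ≤ ‖x + lp.single 1 γ (-(x γ))‖ := norm_nonneg _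
    linarith
  have hsmul : ∀ c : ℝ, lp.single 1 γ₀ c = c • e := by
    intro c
    rw [he, ← lp.single_smul]
    norm_num
  -- result once we know x = a • e with |a| = |t|
  have finish : x = a • e → |a| = |t| →
      x = t • e ∨ x = -(t • e) := by
    intro hxe hat
    rcases abs_eq_abs.mp hat with h | h
    · left; rw [hxe, h]
    · right; rw [hxe, h, neg_smul]
  by_cases h1t : |t| ≤ 1
  · -- small t case
    have hsum := pair_sum (hf x e)
    have l1 : f x + f e = (t + 1) • f e := by rw [hx, add_smul, one_smul]
    have l2 : f x - f e = (t - 1) • f e := by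
      rw [hx, sub_smul, one_smul]
    rw [l1, l2, norm_smul, norm_smul, hfe, mul_one, mul_one] at hsum
    have r1 : ‖x + e‖ = ‖x‖ + |a + 1| - |a| := by
      rw [he]; exact normAddSingle x γ₀ 1
    have r2 : ‖x - e‖ = ‖x‖ + |a - 1| - |a| := by
      rw [he]; exact normSubSingle x γ₀ 1
    rw [r1, r2, hxnorm] at hsum
    have habs2 : |a + 1| + |a - 1| ≥ 2 := by
      rcases abs_cases (a + 1) with ⟨h1, h2⟩ | ⟨h1, h2⟩ <;>
        rcases abs_cases (a - 1) with ⟨h3, h4⟩ | ⟨h3, h4⟩ <;> linarith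
    have htsum : ‖(t + 1 : ℝ)‖ + ‖(t - 1 : ℝ)‖ = 2 := by
      rw [Real.norm_eq_abs, Real.norm_eq_abs]
      rcases abs_cases t with ⟨h1, h2⟩ | ⟨h1, h2⟩ <;>
        rcases abs_cases (t + 1) with ⟨h3, h4⟩ | ⟨h3, h4⟩ <;>
          rcases abs_cases (t - 1) with ⟨h5, h6⟩ | ⟨h5, h6⟩ <;> linarith
    have hale : |a| ≤ |t| := hxnorm ▸ hcoordle γ₀
    have hat : |a| = |t| := by linarith
    -- now the tail is zero
    have hz : ‖x + lp.single 1 γ₀ (-a)‖ = 0 := by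
      rw [normAddSingle, hxnorm]
      simp [← ha, hat]
    have hz0 : x + lp.single 1 γ₀ (-a) = 0 := norm_eq_zero.mp hz
    rw [hsmul] at hz0
    have hxe : x = a • e := by linear_combination (norm := module) hz0
    exact finish hxe hat
  · -- large t case
    push_neg at h1t
    have hcoord : ∀ γ, γ ≠ γ₀ → x γ = 0 := by
      intro γ₁ hγ₁
      set e₁ : lp (fun _ : Γ => ℝ) 1 := lp.single 1 γ₁ (1 : ℝ) with he₁
      have he₁n : ‖e₁‖ = 1 := by
        have := lp.norm_single (p := 1) (E := fun _ : Γ => ℝ) (by norm_num) γ₁ (1:ℝ)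
        simpa [he₁] using this
      have hfe₁ : ‖f e₁‖ = 1 := by rw [hnorm, he₁n]
      have heγ : e γ₁ = 0 := by
        rw [he]; exact lp.single_apply_ne 1 γ₀ _ hγ₁
      have hee₁p : ‖e + e₁‖ = 2 := by
        rw [he₁, normAddSingle, heγ, he1]; norm_num
      have hee₁m : ‖e - e₁‖ = 2 := by
        rw [he₁, normSubSingle, heγ, he1]; norm_num
      -- deduce ‖f e ± f e₁‖ = 2
      obtain ⟨q1, q2, -, -⟩ := pair_facts (hf e e₁)
      rw [hee₁p, hee₁m] at q1 q2
      have hfp : ‖f e + f e₁‖ = 2 := by rcases q1 with h | h <;> exact h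
      have hfm : ‖f e - f e₁‖ = 2 := by rcases q2 with h | h <;> exact h
      -- ‖t • f e ± f e₁‖ = |t| + 1
      have habs1 : (1:ℝ) ≤ |t| := le_of_lt h1t
      have hkey1 : ‖t • f e + f e₁‖ = |t| + 1 := by
        rcases le_or_gt 1 t with ht | ht
        · rw [abs_of_nonneg (by linarith)]
          exact normTSmul _ _ t ht hfe hfe₁ hfp
        · have ht' : 1 ≤ -t := by
            rcases abs_cases t with ⟨h1, h2⟩ | ⟨h1, h2⟩ <;> linarith
          have : t • f e + f e₁ = -((-t) • f e + (-(f e₁))) := by module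
          rw [this, norm_neg, abs_of_neg (by linarith)]
          exact normTSmul _ _ (-t) ht' hfe (by rw [norm_neg, hfe₁])
            (by rw [← sub_eq_add_neg, hfm])
      have hkey2 : ‖t • f e - f e₁‖ = |t| + 1 := by
        rcases le_or_gt 1 t with ht | ht
        · rw [abs_of_nonneg (by linarith), sub_eq_add_neg]
          exact normTSmul _ _ t ht hfe (by rw [norm_neg, hfe₁])
            (by rw [← sub_eq_add_neg, hfm])
        · have ht' : 1 ≤ -t := by
            rcases abs_cases t with ⟨h1, h2⟩ | ⟨h1, h2⟩ <;> linarith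
          have : t • f e - f e₁ = -((-t) • f e + f e₁) := by module
          rw [this, norm_neg, abs_of_neg (by linarith)]
          exact normTSmul _ _ (-t) ht' hfe hfe₁ hfp
      -- compare x with e₁
      obtain ⟨-, -, q3, q4⟩ := pair_facts (hf x e₁)
      rw [hx, hkey1, hkey2] at q3 q4
      have hxp : ‖x + e₁‖ = |t| + 1 := by rcases q3 with h | h <;> exact h
      have hxm : ‖x - e₁‖ = |t| + 1 := by rcases q4 with h | h <;> exact h
      have hxp' := normAddSingle x γ₁ 1
      have hxm' := normSubSingle x γ₁ 1
      rw [← he₁, hxp, hxnorm] at hxp'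
      rw [← he₁, hxm, hxnorm] at hxm'
      set b : ℝ := x γ₁
      rcases abs_cases b with ⟨h1, h2⟩ | ⟨h1, h2⟩ <;>
        rcases abs_cases (b + 1) with ⟨h3, h4⟩ | ⟨h3, h4⟩ <;>
          rcases abs_cases (b - 1) with ⟨h5, h6⟩ | ⟨h5, h6⟩ <;> linarith
    have hxe : x = a • e := by
      rw [eq_single_aux x γ₀ hcoord, ← ha, hsmul]
    have hat : |a| = |t| := by
      have h5 : ‖x‖ = |a| := by
        rw [hxe, norm_smul, he1, Real.norm_eq_abs, mul_one]
      rw [← hxnorm, h5]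
    exact finish hxe hat
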